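/- For a depth-L neural network with differentiable activation, the minimum eigenvalue of the empirical NTK satisfies λ_min(J J^T) ≥ Σ_{k=0}^{L−1} λ_min(F_k F_k^T) · min_{i∈[N]} ‖(G_{k+1})_{i:}‖₂². -/

import Mathlib

open MeasureTheory ProbabilityTheory Finset NNReal
open scoped Classical

noncomputable section

/-- squared Euclidean norm of a vector -/
def sqNorm {m : ℕ} (v : Fin m → ℝ) : ℝ := ∑ i, v i ^ 2

/-- view a plain vector as an element of Euclidean space (same underlying type) -/
def toEuc {m : ℕ} (v : Fin m → ℝ) : EuclideanSpace ℝ (Fin m) := WithLp.toLp 2 v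

/-- feature maps of the network: `W j` is the paper's `W_{j+1} ∈ ℝ^{n_j × n_{j+1}}`,
`feat φ n W k x = f_k(x)` (activation `φ` applied at every hidden layer, `f_0 = id`). -/
def feat (φ : ℝ → ℝ) (n : ℕ → ℕ) (W : ∀ j : ℕ, Fin (n j) → Fin (n (j+1)) → ℝ) :
    (k : ℕ) → (Fin (n 0) → ℝ) → Fin (n k) → ℝ
  | 0, x => x
  | (k+1), x => fun j => φ (∑ i, W k i j * feat φ n W k x i)

/-- the cosine activation x ↦ cos (s x) -/
def cosAct (s : ℝ) : ℝ → ℝ := fun t => Real.cos (s * t)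

/-- pre-activations of layer k+1 (the paper's g_{k+1,j}(x)) -/
def preact (φ : ℝ → ℝ) (n : ℕ → ℕ) (W : ∀ j : ℕ, Fin (n j) → Fin (n (j+1)) → ℝ)
    (k : ℕ) (x : Fin (n 0) → ℝ) (j : Fin (n (k+1))) : ℝ :=
  ∑ i, W k i j * feat φ n W k x i

/-- diagonal entries of the paper's Σ_{k+1}(x) : φ'(g_{k+1,j}(x)) -/
def actD (φ : ℝ → ℝ) (n : ℕ → ℕ) (W : ∀ j : ℕ, Fin (n j) → Fin (n (j+1)) → ℝ)
    (k : ℕ) (x : Fin (n 0) → ℝ) (j : Fin (n (k+1))) : ℝ :=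
  deriv φ (preact φ n W k x j)

/-- extend a finite family of weight matrices (layers 0,…,L-1) by zero -/
def extendW (L : ℕ) (n : ℕ → ℕ) (ω : ∀ j : Fin L, Fin (n j) → Fin (n (j+1)) → ℝ) :
    ∀ j : ℕ, Fin (n j) → Fin (n (j+1)) → ℝ :=
  fun j => if h : j < L then ω ⟨j, h⟩ else 0

/-- i.i.d. Gaussian initialization: entries of `W j` (the paper's W_{j+1}) are N(0, β_{j+1}²) -/
def weightMeasure (L : ℕ) (n : ℕ → ℕ) (β : ℕ → ℝ≥0) :
    Measure (∀ j : Fin L, Fin (n j) → Fin (n (j+1)) → ℝ) :=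
  Measure.pi fun j => Measure.pi fun _ => Measure.pi fun _ => gaussianReal 0 (β ((j:ℕ)+1) ^ 2)

/-- min_{l ∈ [0,k]} n_l -/
def minWidth (n : ℕ → ℕ) (k : ℕ) : ℕ :=
  (Finset.range (k+1)).inf' ⟨0, Finset.mem_range.mpr (Nat.succ_pos k)⟩ n

/-- the matrix Σ_{a+1}(x) ∏_{l=a+2}^{a+1+m} W_l Σ_l(x) (paper indices) -/
def backChain (φ : ℝ → ℝ) (n : ℕ → ℕ) (W : ∀ j : ℕ, Fin (n j) → Fin (n (j+1)) → ℝ)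
    (a : ℕ) (x : Fin (n 0) → ℝ) :
    (m : ℕ) → Fin (n (a+1)) → Fin (n (a+1+m)) → ℝ
  | 0 => fun i j => if i = j then actD φ n W a x i else 0
  | (m+1) => fun i j =>
      ∑ l, backChain φ n W a x m i l * (W (a+1+m) l j * actD φ n W (a+1+m) x j)

/-- the vector Σ_{a+1}(x) (∏_{l=a+2}^{a+1+m} W_l Σ_l(x)) W_{a+2+m}, summed over the
final output coordinates (of which there is exactly one when n_{a+2+m} = 1) -/
def gVec (φ : ℝ → ℝ) (n : ℕ → ℕ) (W : ∀ j : ℕ, Fin (n j) → Fin (n (j+1)) → ℝ)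
    (a m : ℕ) (x : Fin (n 0) → ℝ) : Fin (n (a+1)) → ℝ :=
  fun i => ∑ l, ∑ r, backChain φ n W a x m i l * W (a+1+m) l r

/-- network output f_L(x) (summed over the output coordinates; the output layer is
linear), with L = Lm1 + 1 -/
def outScalar (φ : ℝ → ℝ) (n : ℕ → ℕ) (Lm1 : ℕ)
    (W : ∀ j : ℕ, Fin (n j) → Fin (n (j+1)) → ℝ) (x : Fin (n 0) → ℝ) : ℝ :=
  ∑ r : Fin (n (Lm1+1)), ∑ i, W Lm1 i r * feat φ n W Lm1 x i

/-- partial derivative of the network output with respect to the entry (a,b) of the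
j-th weight matrix, at the weight configuration ω -/
def pDeriv (φ : ℝ → ℝ) (n : ℕ → ℕ) (Lm1 : ℕ)
    (ω : ∀ j : Fin (Lm1+1), Fin (n j) → Fin (n (j+1)) → ℝ)
    (j : Fin (Lm1+1)) (a : Fin (n j)) (b : Fin (n (j+1))) (x : Fin (n 0) → ℝ) : ℝ :=
  deriv (fun t : ℝ => outScalar φ n Lm1
    (extendW (Lm1+1) n (Function.update ω j
      (Function.update (ω j) a (Function.update (ω j a) b t)))) x) (ω j a b)

/-- the empirical NTK matrix K_L = J Jᵀ -/
def ntkMat (φ : ℝ → ℝ) (n : ℕ → ℕ) (Lm1 : ℕ)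
    (ω : ∀ j : Fin (Lm1+1), Fin (n j) → Fin (n (j+1)) → ℝ)
    {N : ℕ} (X : Fin N → (Fin (n 0) → ℝ)) : Fin N → Fin N → ℝ :=
  fun i i' => ∑ j : Fin (Lm1+1), ∑ a, ∑ b,
    pDeriv φ n Lm1 ω j a b (X i) * pDeriv φ n Lm1 ω j a b (X i')

/-- the Gram matrix F_k F_kᵀ of the layer-k features -/
def featGram (φ : ℝ → ℝ) (n : ℕ → ℕ) (W : ∀ j : ℕ, Fin (n j) → Fin (n (j+1)) → ℝ)
    (k : ℕ) {N : ℕ} (X : Fin N → (Fin (n 0) → ℝ)) : Fin N → Fin N → ℝ :=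
  fun i i' => ∑ j, feat φ n W k (X i) j * feat φ n W k (X i') j

/-- entries of G_{a+1} G_{a+1}ᵀ : for a < Lm1 the i-th row of G_{a+1} is
Σ_{a+1}(x_i) (∏_{l=a+2}^{L-1} W_l Σ_l(x_i)) W_L, and for a = Lm1 (i.e. G_L) each row is
the constant vector 1_N/√N -/
def gGram (φ : ℝ → ℝ) (n : ℕ → ℕ) (W : ∀ j : ℕ, Fin (n j) → Fin (n (j+1)) → ℝ)
    (Lm1 : ℕ) {N : ℕ} (X : Fin N → (Fin (n 0) → ℝ)) (a : ℕ) (i i' : Fin N) : ℝ :=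
  if a < Lm1 then
    ∑ j : Fin (n (a+1)),
      gVec φ n W a (Lm1-(a+1)) (X i) j * gVec φ n W a (Lm1-(a+1)) (X i') j
  else ∑ _r : Fin (n (Lm1+1)), (1/Real.sqrt N) * (1/Real.sqrt N)

/-- the minimum eigenvalue of a symmetric matrix, via the Rayleigh quotient -/
def lamMin {N : ℕ} (K : Fin N → Fin N → ℝ) : ℝ :=
  ⨅ v : {v : Fin N → ℝ // ∑ i, v i ^ 2 = 1}, ∑ i, ∑ j, v.1 i * K i j * v.1 j


/-- feat only depends on weights below k -/
lemma feat_congr (φ : ℝ → ℝ) (n : ℕ → ℕ)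
    (W W' : ∀ j : ℕ, Fin (n j) → Fin (n (j+1)) → ℝ) (x : Fin (n 0) → ℝ) :
    ∀ k, (∀ l < k, W l = W' l) → feat φ n W k x = feat φ n W' k x := by
  intro k
  induction k with
  | zero => intro _; rfl
  | succ k ih =>
    intro h
    funext c
    show φ (∑ i, W k i c * feat φ n W k x i) = φ (∑ i, W' k i c * feat φ n W' k x i)
    rw [ih (fun l hl => h l (Nat.lt_succ_of_lt hl)), h k (Nat.lt_succ_self k)]

/-- derivative of the features along a curve of weights that moves only entry (j,a,b) -/
lemma hasDerivAt_feat (φ : ℝ → ℝ) (hφ : Differentiable ℝ φ) (n : ℕ → ℕ)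
    (j : ℕ) (a : Fin (n j)) (b : Fin (n (j+1))) (t₀ : ℝ)
    (V : ℝ → ∀ k : ℕ, Fin (n k) → Fin (n (k+1)) → ℝ)
    (hV1 : ∀ t k, k ≠ j → V t k = V t₀ k)
    (hV2 : ∀ t i c, V t j i c = if i = a ∧ c = b then t else V t₀ j i c)
    (hV3 : V t₀ j a b = t₀)
    (x : Fin (n 0) → ℝ) :
    ∀ m (c : Fin (n (j+1+m))),
      HasDerivAt (fun t => feat φ n (V t) (j+1+m) x c)
        (feat φ n (V t₀) j x a * backChain φ n (V t₀) j x m b c) t₀ := by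
  have hfeat_le : ∀ t k, k ≤ j → feat φ n (V t) k x = feat φ n (V t₀) k x := by
    intro t k hk
    exact feat_congr φ n _ _ x k (fun l hl => hV1 t l (by omega))
  intro m
  induction m with
  | zero =>
    intro c
    have hfun : ∀ t, feat φ n (V t) (j+1) x c
        = φ ((if c = b then feat φ n (V t₀) j x a else 0) * (t - t₀)
              + preact φ n (V t₀) j x c) := by
      intro t
      show φ (∑ i, V t j i c * feat φ n (V t) j x i) = _
      rw [hfeat_le t j le_rfl]
      congr 1
      unfold preact
      by_cases hc : c = b
      · subst hc
        simp only [and_true, if_pos rfl]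
        have : ∀ i, V t j i c * feat φ n (V t₀) j x i
            = (if i = a then (t - t₀) * feat φ n (V t₀) j x i else 0)
              + V t₀ j i c * feat φ n (V t₀) j x i := by
          intro i
          rw [hV2 t i c]
          by_cases hi : i = a
          · subst hi; simp [hV3]; ring
          · simp [hi]
        rw [Finset.sum_congr rfl (fun i _ => this i), Finset.sum_add_distrib,
          Finset.sum_ite_eq' Finset.univ a (fun i => (t - t₀) * feat φ n (V t₀) j x i)]
        simp [mul_comm]
      · simp only [if_neg hc, zero_mul, zero_add]
        refine Finset.sum_congr rfl fun i _ => ?_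
        rw [hV2 t i c]
        simp [hc]
    have hg : HasDerivAt (fun t => (if c = b then feat φ n (V t₀) j x a else 0) * (t - t₀)
        + preact φ n (V t₀) j x c)
        (if c = b then feat φ n (V t₀) j x a else 0) t₀ := by
      simpa using (((hasDerivAt_id t₀).sub_const t₀).const_mul
        (if c = b then feat φ n (V t₀) j x a else 0)).add_const (preact φ n (V t₀) j x c)
    have := (hφ _).hasDerivAt.comp t₀ hg
    simp only [sub_self, mul_zero, zero_add] at this
    have heq : (fun t => feat φ n (V t) (j+1) x c)
        = (φ ∘ fun t => (if c = b then feat φ n (V t₀) j x a else 0) * (t - t₀)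
            + preact φ n (V t₀) j x c) := funext fun t => hfun t
    rw [heq]
    refine this.congr_deriv (Eq.symm ?_)
    show feat φ n (V t₀) j x a * backChain φ n (V t₀) j x 0 b c = _
    unfold backChain actD
    by_cases hc : c = b
    · subst hc; simp [mul_comm]
    · simp [hc, Ne.symm hc]
  | succ m ih =>
    intro c
    have hW : ∀ t, V t (j+1+m) = V t₀ (j+1+m) := fun t => hV1 t _ (by omega)
    have hg : HasDerivAt (fun t => ∑ l, V t₀ (j+1+m) l c * feat φ n (V t) (j+1+m) x l)
        (∑ l, V t₀ (j+1+m) l c * (feat φ n (V t₀) j x a * backChain φ n (V t₀) j x m b l))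
        t₀ := HasDerivAt.fun_sum fun l _ => (ih l).const_mul _
    have heq : (fun t => feat φ n (V t) (j+1+(m+1)) x c)
        = (φ ∘ fun t => ∑ l, V t₀ (j+1+m) l c * feat φ n (V t) (j+1+m) x l) := by
      funext t
      show φ (∑ l, V t (j+1+m) l c * feat φ n (V t) (j+1+m) x l) = _
      rw [hW t]; rfl
    rw [heq]
    have := (hφ _).hasDerivAt.comp t₀ hg
    refine this.congr_deriv (Eq.symm ?_)
    · show feat φ n (V t₀) j x a * backChain φ n (V t₀) j x (m+1) b c = _
      show _ = deriv φ (∑ l, V t₀ (j+1+m) l c * feat φ n (V t₀) (j+1+m) x l) * _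
      show _ = actD φ n (V t₀) (j+1+m) x c * _
      rw [show backChain φ n (V t₀) j x (m+1) b c
        = ∑ l, backChain φ n (V t₀) j x m b l
            * (V t₀ (j+1+m) l c * actD φ n (V t₀) (j+1+m) x c) from rfl]
      rw [Finset.mul_sum, Finset.mul_sum]
      refine Finset.sum_congr rfl fun l _ => ?_
      ring

lemma pderiv_lt (φ : ℝ → ℝ) (hφ : Differentiable ℝ φ) (n : ℕ → ℕ) (j m : ℕ)
    (ω : ∀ k : Fin (j+1+m+1), Fin (n k) → Fin (n (k+1)) → ℝ)
    (a : Fin (n j)) (b : Fin (n (j+1))) (x : Fin (n 0) → ℝ) :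
    pDeriv φ n (j+1+m) ω ⟨j, by omega⟩ a b x
      = feat φ n (extendW (j+1+m+1) n ω) j x a
        * gVec φ n (extendW (j+1+m+1) n ω) j m x b := by
  have hjL : j < j+1+m+1 := by omega
  set jf : Fin (j+1+m+1) := ⟨j, hjL⟩ with hjf
  set W := extendW (j+1+m+1) n ω with hW
  set t₀ := ω jf a b with ht₀
  set V : ℝ → ∀ k : ℕ, Fin (n k) → Fin (n (k+1)) → ℝ :=
    fun t => extendW (j+1+m+1) n (Function.update ω jf
      (Function.update (ω jf) a (Function.update (ω jf a) b t))) with hV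
  have hV4 : V t₀ = W := by
    simp only [hV, hW, Function.update_eq_self, ht₀]
  have hV1 : ∀ t k, k ≠ j → V t k = W k := by
    intro t k hk
    simp only [hV, hW, extendW]
    by_cases h : k < j+1+m+1
    · simp only [dif_pos h]
      rw [Function.update_of_ne (by simpa [hjf, Fin.ext_iff] using hk)]
    · simp only [dif_neg h]
  have hWj : ∀ (i : Fin (n j)) (c : Fin (n (j+1))), W j i c = ω jf i c := by
    intro i c
    simp only [hW, extendW, dif_pos hjL]; rfl
  have hV2 : ∀ t (i : Fin (n j)) (c : Fin (n (j+1))),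
      V t j i c = if i = a ∧ c = b then t else W j i c := by
    intro t i c
    have h1 : V t j i c = Function.update (ω jf)
        a (Function.update (ω jf a) b t) i c := by
      simp only [hV, extendW, dif_pos hjL]
      exact congrFun (congrFun (Function.update_self jf _ ω) i) c
    rw [h1, hWj i c]
    by_cases hi : i = a
    · subst hi
      rw [Function.update_self]
      by_cases hc : c = b
      · subst hc; simp [Function.update_self]
      · simp [hc, Function.update_of_ne hc]
    · simp [hi, Function.update_of_ne hi]
  have hV3 : V t₀ j a b = t₀ := by rw [hV4, hWj, ht₀]
  have hV1' : ∀ t k, k ≠ j → V t k = V t₀ k := by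
    intro t k hk; rw [hV4]; exact hV1 t k hk
  have hV2' : ∀ t (i : Fin (n j)) (c : Fin (n (j+1))),
      V t j i c = if i = a ∧ c = b then t else V t₀ j i c := by
    intro t i c; rw [hV4]; exact hV2 t i c
  have hder := hasDerivAt_feat φ hφ n j a b t₀ V hV1' hV2' hV3 x m
  rw [hV4] at hder
  have hout : (fun t => outScalar φ n (j+1+m) (V t) x)
      = fun t => ∑ r : Fin (n (j+1+m+1)), ∑ i,
          W (j+1+m) i r * feat φ n (V t) (j+1+m) x i := by
    funext t
    unfold outScalar
    refine Finset.sum_congr rfl fun r _ => Finset.sum_congr rfl fun i _ => ?_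
    rw [hV1 t (j+1+m) (by omega)]
  have hd : HasDerivAt (fun t => ∑ r : Fin (n (j+1+m+1)), ∑ i,
        W (j+1+m) i r * feat φ n (V t) (j+1+m) x i)
      (∑ r : Fin (n (j+1+m+1)), ∑ i,
        W (j+1+m) i r * (feat φ n W j x a * backChain φ n W j x m b i)) t₀ :=
    HasDerivAt.fun_sum fun r _ => HasDerivAt.fun_sum fun i _ => (hder i).const_mul _
  have hpd : pDeriv φ n (j+1+m) ω ⟨j, by omega⟩ a b x
      = deriv (fun t => outScalar φ n (j+1+m) (V t) x) t₀ := rfl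
  rw [hpd, hout, hd.deriv]
  unfold gVec
  rw [Finset.sum_comm, Finset.mul_sum]
  refine Finset.sum_congr rfl fun l _ => ?_
  rw [Finset.mul_sum]
  refine Finset.sum_congr rfl fun r _ => ?_
  ring

lemma pderiv_last (φ : ℝ → ℝ) (n : ℕ → ℕ) (Lm1 : ℕ)
    (ω : ∀ k : Fin (Lm1+1), Fin (n k) → Fin (n (k+1)) → ℝ)
    (a : Fin (n Lm1)) (b : Fin (n (Lm1+1))) (x : Fin (n 0) → ℝ) :
    pDeriv φ n Lm1 ω ⟨Lm1, Nat.lt_succ_self Lm1⟩ a b x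
      = feat φ n (extendW (Lm1+1) n ω) Lm1 x a := by
  have hjL : Lm1 < Lm1+1 := Nat.lt_succ_self Lm1
  set jf : Fin (Lm1+1) := ⟨Lm1, hjL⟩ with hjf
  set W := extendW (Lm1+1) n ω with hW
  set t₀ := ω jf a b with ht₀
  set V : ℝ → ∀ k : ℕ, Fin (n k) → Fin (n (k+1)) → ℝ :=
    fun t => extendW (Lm1+1) n (Function.update ω jf
      (Function.update (ω jf) a (Function.update (ω jf a) b t))) with hV
  have hV1 : ∀ t k, k ≠ Lm1 → V t k = W k := by
    intro t k hk
    simp only [hV, hW, extendW]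
    by_cases h : k < Lm1+1
    · simp only [dif_pos h]
      rw [Function.update_of_ne (by simpa [hjf, Fin.ext_iff] using hk)]
    · simp only [dif_neg h]
  have hWj : ∀ (i : Fin (n Lm1)) (c : Fin (n (Lm1+1))), W Lm1 i c = ω jf i c := by
    intro i c
    simp only [hW, extendW, dif_pos hjL]; rfl
  have hV2 : ∀ t (i : Fin (n Lm1)) (c : Fin (n (Lm1+1))),
      V t Lm1 i c = if i = a ∧ c = b then t else W Lm1 i c := by
    intro t i c
    have h1 : V t Lm1 i c = Function.update (ω jf)
        a (Function.update (ω jf a) b t) i c := by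
      simp only [hV, extendW, dif_pos hjL]
      exact congrFun (congrFun (Function.update_self jf _ ω) i) c
    rw [h1, hWj i c]
    by_cases hi : i = a
    · subst hi
      rw [Function.update_self]
      by_cases hc : c = b
      · subst hc; simp [Function.update_self]
      · simp [hc, Function.update_of_ne hc]
    · simp [hi, Function.update_of_ne hi]
  have hfeat : ∀ t, feat φ n (V t) Lm1 x = feat φ n W Lm1 x := by
    intro t
    exact feat_congr φ n _ _ x Lm1 (fun l hl => hV1 t l (by omega))
  have hfun : (fun t => outScalar φ n Lm1 (V t) x)
      = fun t => (t - t₀) * feat φ n W Lm1 x a + outScalar φ n Lm1 W x := by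
    funext t
    unfold outScalar
    have hterm : ∀ (r : Fin (n (Lm1+1))) (i : Fin (n Lm1)),
        V t Lm1 i r * feat φ n (V t) Lm1 x i
          = (if i = a ∧ r = b then (t - t₀) * feat φ n W Lm1 x i else 0)
            + W Lm1 i r * feat φ n W Lm1 x i := by
      intro r i
      rw [hfeat t, hV2 t i r]
      by_cases hi : i = a
      · subst hi
        by_cases hc : r = b
        · subst hc
          rw [if_pos ⟨rfl, rfl⟩, if_pos ⟨rfl, rfl⟩, hWj i r, ← ht₀]; ring
        · simp [hc]
      · simp [hi]
    rw [Finset.sum_congr rfl (fun r _ => Finset.sum_congr rfl (fun i _ => hterm r i))]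
    simp only [Finset.sum_add_distrib]
    congr 1
    simp [ite_and, Finset.sum_ite_eq']
  have hd : HasDerivAt (fun t => (t - t₀) * feat φ n W Lm1 x a + outScalar φ n Lm1 W x)
      (feat φ n W Lm1 x a) t₀ := by
    simpa using (((hasDerivAt_id t₀).sub_const t₀).mul_const
      (feat φ n W Lm1 x a)).add_const (outScalar φ n Lm1 W x)
  have hpd : pDeriv φ n Lm1 ω ⟨Lm1, Nat.lt_succ_self Lm1⟩ a b x
      = deriv (fun t => outScalar φ n Lm1 (V t) x) t₀ := rfl
  rw [hpd, hfun, hd.deriv]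

lemma quad_gram {N M : ℕ} (u : Fin N → Fin M → ℝ) (v : Fin N → ℝ) :
    ∑ i, ∑ i', v i * (∑ p, u i p * u i' p) * v i' = ∑ p, (∑ i, v i * u i p)^2 := by
  simp only [Finset.mul_sum, Finset.sum_mul]
  rw [Finset.sum_congr rfl fun i (_ : i ∈ Finset.univ) => Finset.sum_comm]
  rw [Finset.sum_comm]
  refine Finset.sum_congr rfl fun p _ => ?_
  rw [sq, Finset.sum_mul]
  refine Finset.sum_congr rfl fun i _ => ?_
  rw [Finset.mul_sum]
  refine Finset.sum_congr rfl fun i' _ => ?_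
  ring

lemma quad_hadamard {N M : ℕ} (A : Fin N → Fin N → ℝ) (g : Fin N → Fin M → ℝ)
    (v : Fin N → ℝ) :
    ∑ i, ∑ i', v i * (A i i' * ∑ q, g i q * g i' q) * v i'
      = ∑ q, ∑ i, ∑ i', (v i * g i q) * A i i' * (v i' * g i' q) := by
  simp only [Finset.mul_sum, Finset.sum_mul]
  rw [Finset.sum_congr rfl fun i (_ : i ∈ Finset.univ) => Finset.sum_comm]
  rw [Finset.sum_comm]
  refine Finset.sum_congr rfl fun q _ => Finset.sum_congr rfl fun i _ =>
    Finset.sum_congr rfl fun i' _ => ?_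
  ring

lemma sphere_nonempty_aux {N : ℕ} (hN : 0 < N) :
    Nonempty {v : Fin N → ℝ // ∑ i, v i ^ 2 = 1} := by
  refine ⟨⟨fun i => if i = ⟨0, hN⟩ then 1 else 0, ?_⟩⟩
  have : ∀ i : Fin N, (if i = ⟨0, hN⟩ then (1:ℝ) else 0)^2
      = if i = ⟨0, hN⟩ then 1 else 0 := by
    intro i; split <;> norm_num
  rw [Finset.sum_congr rfl fun i _ => this i, Finset.sum_ite_eq' Finset.univ]
  simp

lemma lamMin_nonneg {N : ℕ} (hN : 0 < N) (K : Fin N → Fin N → ℝ)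
    (hK : ∀ w : Fin N → ℝ, 0 ≤ ∑ i, ∑ i', w i * K i i' * w i') :
    0 ≤ lamMin K := by
  haveI := sphere_nonempty_aux hN
  exact le_ciInf fun v => hK v.1

lemma lamMin_le_quad {N : ℕ} (hN : 0 < N) (K : Fin N → Fin N → ℝ)
    (hK : ∀ w : Fin N → ℝ, 0 ≤ ∑ i, ∑ i', w i * K i i' * w i')
    (u : Fin N → ℝ) (hu : ∑ i, u i ^ 2 = 1) :
    lamMin K ≤ ∑ i, ∑ i', u i * K i i' * u i' := by
  haveI := sphere_nonempty_aux hN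
  exact ciInf_le ⟨0, by rintro _ ⟨w, rfl⟩; exact hK w.1⟩
    (⟨u, hu⟩ : {v : Fin N → ℝ // ∑ i, v i ^ 2 = 1})

lemma lamMin_mul_le {N : ℕ} (hN : 0 < N) (K : Fin N → Fin N → ℝ)
    (hK : ∀ w : Fin N → ℝ, 0 ≤ ∑ i, ∑ i', w i * K i i' * w i') (w : Fin N → ℝ) :
    lamMin K * (∑ i, w i ^ 2) ≤ ∑ i, ∑ i', w i * K i i' * w i' := by
  set s := ∑ i, w i ^ 2 with hs
  have hs0 : 0 ≤ s := Finset.sum_nonneg fun i _ => sq_nonneg _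
  rcases eq_or_lt_of_le hs0 with h | h
  · rw [← h, mul_zero]; exact hK w
  · set u := fun i => w i / Real.sqrt s with hu
    have hss : Real.sqrt s * Real.sqrt s = s := Real.mul_self_sqrt hs0
    have hu1 : ∑ i, u i ^ 2 = 1 := by
      simp only [hu, div_pow]
      rw [← Finset.sum_div, Real.sq_sqrt hs0, ← hs, div_self (ne_of_gt h)]
    have hQ : ∑ i, ∑ i', u i * K i i' * u i'
        = (∑ i, ∑ i', w i * K i i' * w i') / s := by
      rw [Finset.sum_div]
      refine Finset.sum_congr rfl fun i _ => ?_
      rw [Finset.sum_div]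
      refine Finset.sum_congr rfl fun i' _ => ?_
      simp only [hu]
      have : w i / Real.sqrt s * K i i' * (w i' / Real.sqrt s)
          = w i * K i i' * w i' / (Real.sqrt s * Real.sqrt s) := by ring
      rw [this, hss]
    have := lamMin_le_quad hN K hK u hu1
    rw [hQ, le_div_iff₀ h] at this
    exact this

lemma pderiv_lt' (φ : ℝ → ℝ) (hφ : Differentiable ℝ φ) (n : ℕ → ℕ) (Lm1 : ℕ)
    (ω : ∀ k : Fin (Lm1+1), Fin (n k) → Fin (n (k+1)) → ℝ)
    (jf : Fin (Lm1+1)) (hlt : (jf:ℕ) < Lm1)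
    (a : Fin (n jf)) (b : Fin (n (jf+1))) (x : Fin (n 0) → ℝ) :
    pDeriv φ n Lm1 ω jf a b x
      = feat φ n (extendW (Lm1+1) n ω) jf x a
        * gVec φ n (extendW (Lm1+1) n ω) jf (Lm1 - (jf+1)) x b := by
  obtain ⟨j, hj⟩ := jf
  simp only at hlt a b ⊢
  obtain ⟨m, rfl⟩ : ∃ m, Lm1 = j+1+m := ⟨Lm1 - (j+1), by omega⟩
  have hm : j+1+m - (j+1) = m := by omega
  rw [hm]
  exact pderiv_lt φ hφ n j m ω a b x

lemma pderiv_last' (φ : ℝ → ℝ) (n : ℕ → ℕ) (Lm1 : ℕ)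
    (ω : ∀ k : Fin (Lm1+1), Fin (n k) → Fin (n (k+1)) → ℝ)
    (jf : Fin (Lm1+1)) (heq : (jf:ℕ) = Lm1)
    (a : Fin (n jf)) (b : Fin (n (jf+1))) (x : Fin (n 0) → ℝ) :
    pDeriv φ n Lm1 ω jf a b x
      = feat φ n (extendW (Lm1+1) n ω) jf x a := by
  obtain ⟨j, hj⟩ := jf
  have hjL : j = Lm1 := heq
  subst hjL
  exact pderiv_last φ n j ω a b x

/-- Lower bound for the NTK spectrum: for a depth-L network (L = Lm1+1, output width 1)
with differentiable activation φ,
λ_min(J Jᵀ) ≥ Σ_{k=0}^{L−1} λ_min(F_k F_kᵀ) · min_{i∈[N]} ‖(G_{k+1})_{i:}‖₂². -/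
theorem stmt17
    (Lm1 : ℕ) (φ : ℝ → ℝ) (hφ : Differentiable ℝ φ)
    (n : ℕ → ℕ) (hnL : n (Lm1+1) = 1)
    (N : ℕ) (hN : 0 < N) (X : Fin N → (Fin (n 0) → ℝ))
    (ω : ∀ j : Fin (Lm1+1), Fin (n j) → Fin (n (j+1)) → ℝ) :
    ∑ a ∈ Finset.range (Lm1+1),
        lamMin (featGram φ n (extendW (Lm1+1) n ω) a X) *
        (⨅ i : Fin N, gGram φ n (extendW (Lm1+1) n ω) Lm1 X a i i)
      ≤ lamMin (ntkMat φ n Lm1 ω X) := by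
  haveI hne := sphere_nonempty_aux hN
  set W := extendW (Lm1+1) n ω with hW
  have key : ∀ v : {v : Fin N → ℝ // ∑ i, v i ^ 2 = 1},
      ∑ a ∈ Finset.range (Lm1+1),
        lamMin (featGram φ n W a X) * (⨅ i : Fin N, gGram φ n W Lm1 X a i i)
      ≤ ∑ i, ∑ i', v.1 i * ntkMat φ n Lm1 ω X i i' * v.1 i' := by
    rintro ⟨v, hv⟩
    have hsplit : (∑ i, ∑ i', v i * ntkMat φ n Lm1 ω X i i' * v i')
        = ∑ jf : Fin (Lm1+1), ∑ i, ∑ i', v i *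
            (∑ p, ∑ q, pDeriv φ n Lm1 ω jf p q (X i) * pDeriv φ n Lm1 ω jf p q (X i'))
            * v i' := by
      unfold ntkMat
      simp only [Finset.sum_mul, Finset.mul_sum]
      rw [Finset.sum_congr rfl fun i (_ : i ∈ Finset.univ) => Finset.sum_comm,
        Finset.sum_comm]
    rw [hsplit, ← Fin.sum_univ_eq_sum_range
      (fun a => lamMin (featGram φ n W a X) * (⨅ i : Fin N, gGram φ n W Lm1 X a i i))
      (Lm1+1)]
    refine Finset.sum_le_sum fun jf _ => ?_
    rcases lt_or_eq_of_le (Nat.lt_succ_iff.mp jf.isLt) with hlt | heq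
    · -- hidden layer: Hadamard/Schur bound
      set m' := Lm1 - ((jf:ℕ)+1) with hm'
      set A := featGram φ n W (jf:ℕ) X with hA
      set g : Fin N → Fin (n ((jf:ℕ)+1)) → ℝ :=
        fun i q => gVec φ n W (jf:ℕ) m' (X i) q with hg
      have hAq : ∀ w : Fin N → ℝ, 0 ≤ ∑ i, ∑ i', w i * A i i' * w i' := by
        intro w
        have h2 : (∑ i, ∑ i', w i * A i i' * w i')
            = ∑ p, (∑ i, w i * feat φ n W (jf:ℕ) (X i) p)^2 :=
          quad_gram (fun i p => feat φ n W (jf:ℕ) (X i) p) w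
        rw [h2]
        exact Finset.sum_nonneg fun p _ => sq_nonneg _
      have hlamA : 0 ≤ lamMin A := lamMin_nonneg hN A hAq
      have hBdiag : ∀ i i' : Fin N, gGram φ n W Lm1 X (jf:ℕ) i i'
          = ∑ q, g i q * g i' q := by
        intro i i'
        unfold gGram
        rw [if_pos hlt]
      have hcontrib : ∀ i i' : Fin N,
          (∑ p, ∑ q, pDeriv φ n Lm1 ω jf p q (X i) * pDeriv φ n Lm1 ω jf p q (X i'))
            = A i i' * (∑ q, g i q * g i' q) := by
        intro i i'
        rw [Finset.sum_congr rfl fun p _ => Finset.sum_congr rfl fun q _ => by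
          rw [pderiv_lt' φ hφ n Lm1 ω jf hlt p q (X i),
            pderiv_lt' φ hφ n Lm1 ω jf hlt p q (X i')]]
        rw [show A i i' = ∑ p, feat φ n W (jf:ℕ) (X i) p * feat φ n W (jf:ℕ) (X i') p
          from rfl]
        rw [Finset.sum_mul_sum]
        refine Finset.sum_congr rfl fun p _ => Finset.sum_congr rfl fun q _ => ?_
        ring
      have hinf_le : ∀ i : Fin N, (⨅ i : Fin N, gGram φ n W Lm1 X (jf:ℕ) i i)
          ≤ gGram φ n W Lm1 X (jf:ℕ) i i := fun i =>
        ciInf_le (Set.Finite.bddBelow (Set.finite_range _)) i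
      calc lamMin A * (⨅ i : Fin N, gGram φ n W Lm1 X (jf:ℕ) i i)
          ≤ lamMin A * (∑ i, v i ^ 2 * gGram φ n W Lm1 X (jf:ℕ) i i) := by
            refine mul_le_mul_of_nonneg_left ?_ hlamA
            calc (⨅ i : Fin N, gGram φ n W Lm1 X (jf:ℕ) i i)
                = ∑ i, v i ^ 2 * (⨅ i : Fin N, gGram φ n W Lm1 X (jf:ℕ) i i) := by
                  rw [← Finset.sum_mul, hv, one_mul]
              _ ≤ ∑ i, v i ^ 2 * gGram φ n W Lm1 X (jf:ℕ) i i :=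
                  Finset.sum_le_sum fun i _ =>
                    mul_le_mul_of_nonneg_left (hinf_le i) (sq_nonneg _)
        _ = ∑ q, lamMin A * (∑ i, (v i * g i q) ^ 2) := by
            rw [← Finset.mul_sum]
            congr 1
            rw [Finset.sum_congr rfl fun i (_ : i ∈ Finset.univ) => by
              rw [hBdiag i i, Finset.mul_sum]]
            rw [Finset.sum_comm]
            refine Finset.sum_congr rfl fun q _ => Finset.sum_congr rfl fun i _ => ?_
            ring
        _ ≤ ∑ q, ∑ i, ∑ i', (v i * g i q) * A i i' * (v i' * g i' q) :=
            Finset.sum_le_sum fun q _ => lamMin_mul_le hN A hAq (fun i => v i * g i q)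
        _ = ∑ i, ∑ i', v i * (A i i' * ∑ q, g i q * g i' q) * v i' :=
            (quad_hadamard A g v).symm
        _ = ∑ i, ∑ i', v i *
            (∑ p, ∑ q, pDeriv φ n Lm1 ω jf p q (X i) * pDeriv φ n Lm1 ω jf p q (X i'))
            * v i' := by
            refine Finset.sum_congr rfl fun i _ => Finset.sum_congr rfl fun i' _ => ?_
            rw [hcontrib i i']
    · -- output layer
      haveI : Nonempty (Fin N) := ⟨⟨0, hN⟩⟩
      set A := featGram φ n W (jf:ℕ) X with hA
      have hone : n ((jf:ℕ)+1) = 1 := by rw [heq]; exact hnL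
      have hAq : ∀ w : Fin N → ℝ, 0 ≤ ∑ i, ∑ i', w i * A i i' * w i' := by
        intro w
        have h2 : (∑ i, ∑ i', w i * A i i' * w i')
            = ∑ p, (∑ i, w i * feat φ n W (jf:ℕ) (X i) p)^2 :=
          quad_gram (fun i p => feat φ n W (jf:ℕ) (X i) p) w
        rw [h2]
        exact Finset.sum_nonneg fun p _ => sq_nonneg _
      have hlamA : 0 ≤ lamMin A := lamMin_nonneg hN A hAq
      have hcontrib : ∀ i i' : Fin N,
          (∑ p, ∑ q, pDeriv φ n Lm1 ω jf p q (X i) * pDeriv φ n Lm1 ω jf p q (X i'))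
            = A i i' := by
        intro i i'
        rw [Finset.sum_congr rfl fun p _ => Finset.sum_congr rfl fun q _ => by
          rw [pderiv_last' φ n Lm1 ω jf heq p q (X i),
            pderiv_last' φ n Lm1 ω jf heq p q (X i')]]
        rw [Finset.sum_congr rfl fun p (_ : p ∈ Finset.univ) => Finset.sum_const _]
        simp only [Finset.card_univ, Fintype.card_fin, hone, one_smul]
        rfl
      have hdiag : ∀ i : Fin N, gGram φ n W Lm1 X (jf:ℕ) i i = 1/(N:ℝ) := by
        intro i
        unfold gGram
        rw [if_neg (by omega : ¬ ((jf:ℕ) < Lm1)), Finset.sum_const]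
        simp only [Finset.card_univ, Fintype.card_fin, hnL, one_smul]
        rw [div_mul_div_comm, one_mul, Real.mul_self_sqrt (Nat.cast_nonneg N)]
      have hinf : (⨅ i : Fin N, gGram φ n W Lm1 X (jf:ℕ) i i) = 1/(N:ℝ) := by
        simp only [hdiag]
        exact ciInf_const
      have h1N : 1/(N:ℝ) ≤ 1 := by
        rw [div_le_one (by exact_mod_cast hN)]
        exact_mod_cast hN
      rw [hinf]
      calc lamMin A * (1/(N:ℝ)) ≤ lamMin A * 1 :=
            mul_le_mul_of_nonneg_left h1N hlamA
        _ = lamMin A := mul_one _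
        _ ≤ ∑ i, ∑ i', v i * A i i' * v i' := by
            have h3 := lamMin_mul_le hN A hAq v
            rw [hv, mul_one] at h3
            exact h3
        _ = ∑ i, ∑ i', v i *
            (∑ p, ∑ q, pDeriv φ n Lm1 ω jf p q (X i) * pDeriv φ n Lm1 ω jf p q (X i'))
            * v i' := by
            refine Finset.sum_congr rfl fun i _ => Finset.sum_congr rfl fun i' _ => ?_
            rw [hcontrib i i']
  exact le_ciInf key


end
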